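/- For functions f, g, h in the Schwartz class on ℝ³ and s > 3/4, one has |∫_{ℝ³} f·g·h dx| ≤ C(s)·‖f‖_{H^{3/4-s}}·‖g‖_{H^{s+1/4}}·‖h‖_{H^{s+1/4}}, where H^σ denotes the inhomogeneous Sobolev space with norm ‖f‖_{H^σ} = ‖⟨ξ⟩^σ f̂‖_{L²}. -/

import Mathlib

open MeasureTheory FourierTransform

noncomputable def sobNorm (σ : ℝ) (f : EuclideanSpace ℝ (Fin 3) → ℂ) : ℝ :=
  (∫ ξ : EuclideanSpace ℝ (Fin 3),
    Real.sqrt (1 + ‖ξ‖ ^ 2) ^ (2 * σ) * ‖𝓕 f ξ‖ ^ 2) ^ ((1:ℝ)/2)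

namespace TrilinearAux

open SchwartzMap Real Complex MeasureTheory
open scoped RealInnerProductSpace

local notation "E3" => EuclideanSpace ℝ (Fin 3)

lemma one_le_w (ξ : E3) : (1:ℝ) ≤ 1 + ‖ξ‖^2 := by nlinarith [sq_nonneg ‖ξ‖]
lemma w_pos (ξ : E3) : (0:ℝ) < 1 + ‖ξ‖^2 := lt_of_lt_of_le one_pos (one_le_w ξ)

lemma peetre (x y : E3) : 1 + ‖x + y‖^2 ≤ 2*((1+‖x‖^2)*(1+‖y‖^2)) := by
  have h := norm_add_le x y
  have h2 : ‖x+y‖^2 ≤ (‖x‖+‖y‖)^2 := by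
    have := norm_nonneg (x+y); nlinarith
  nlinarith [sq_nonneg (‖x‖ - ‖y‖), sq_nonneg (‖x‖*‖y‖)]

lemma rpow_sq_eq (x : ℝ) (hx : 0 ≤ x) (c : ℝ) : (x ^ c)^2 = x ^ (2*c) := by
  rw [← Real.rpow_natCast (x ^ c) 2, ← Real.rpow_mul hx, mul_comm]
  norm_num

lemma cancel_rpow (ζ : E3) (c : ℝ) :
    ((1:ℝ)+‖ζ‖^2)^(-c) * ((1:ℝ)+‖ζ‖^2)^c = 1 := by
  rw [← Real.rpow_add (w_pos ζ)]; simp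

section CS
variable {α : Type*} [MeasurableSpace α] {μ : Measure α}

lemma aux_integrable_mul {u v : α → ℝ} (hu : AEStronglyMeasurable u μ)
    (hv : AEStronglyMeasurable v μ)
    (hu2 : Integrable (fun x => u x ^ 2) μ) (hv2 : Integrable (fun x => v x ^ 2) μ) :
    Integrable (fun x => u x * v x) μ := by
  refine ((hu2.add hv2).const_mul (1/2)).mono' (hu.mul hv) ?_
  filter_upwards with x
  rw [Real.norm_eq_abs, abs_mul]
  simp only [Pi.add_apply]
  nlinarith [sq_nonneg (|u x| - |v x|), _root_.sq_abs (u x), _root_.sq_abs (v x), abs_nonneg (u x),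
    abs_nonneg (v x)]

lemma aux_CS {u v : α → ℝ} (hu : AEStronglyMeasurable u μ) (hv : AEStronglyMeasurable v μ)
    (hu0 : ∀ x, 0 ≤ u x) (hv0 : ∀ x, 0 ≤ v x)
    (hu2 : Integrable (fun x => u x ^ 2) μ) (hv2 : Integrable (fun x => v x ^ 2) μ) :
    ∫ x, u x * v x ∂μ ≤ Real.sqrt (∫ x, u x ^ 2 ∂μ) * Real.sqrt (∫ x, v x ^ 2 ∂μ) := by
  have hpq : Real.HolderConjugate 2 2 := Real.HolderConjugate.two_two
  have h2 : (ENNReal.ofReal (2:ℝ)) = 2 := by norm_num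
  have hu' : MemLp u (ENNReal.ofReal (2:ℝ)) μ := by
    rw [h2]; exact (memLp_two_iff_integrable_sq hu).2 hu2
  have hv' : MemLp v (ENNReal.ofReal (2:ℝ)) μ := by
    rw [h2]; exact (memLp_two_iff_integrable_sq hv).2 hv2
  have H := integral_mul_le_Lp_mul_Lq_of_nonneg hpq (ae_of_all _ hu0) (ae_of_all _ hv0) hu' hv'
  simp only [Real.rpow_two] at H
  calc ∫ x, u x * v x ∂μ ≤ (∫ x, u x ^ 2 ∂μ) ^ ((1:ℝ)/2) * (∫ x, v x ^ 2 ∂μ) ^ ((1:ℝ)/2) := H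
    _ = _ := by rw [← Real.sqrt_eq_rpow, ← Real.sqrt_eq_rpow]

end CS

lemma wpow_le (c : ℝ) (k : ℕ) (hck : c ≤ k) (ξ : E3) :
    ((1:ℝ) + ‖ξ‖^2) ^ c ≤ 2^k * (1 + ‖ξ‖^(2*k)) := by
  have h1 : ((1:ℝ) + ‖ξ‖^2) ^ c ≤ ((1:ℝ) + ‖ξ‖^2) ^ (k:ℝ) :=
    Real.rpow_le_rpow_of_exponent_le (one_le_w ξ) hck
  rw [Real.rpow_natCast] at h1
  refine h1.trans ?_
  rcases le_total ‖ξ‖ 1 with h | h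
  · have : ((1:ℝ) + ‖ξ‖^2) ^ k ≤ 2 ^ k := by
      apply pow_le_pow_left₀ (by positivity)
      nlinarith [norm_nonneg ξ]
    have h2 : (0:ℝ) ≤ ‖ξ‖^(2*k) := by positivity
    nlinarith [pow_pos (zero_lt_two (α := ℝ)) k]
  · have h1' : ((1:ℝ) + ‖ξ‖^2) ^ k ≤ (2 * ‖ξ‖^2) ^ k := by
      apply pow_le_pow_left₀ (by positivity)
      nlinarith
    rw [mul_pow, ← pow_mul] at h1'
    rw [mul_comm 2 k] at h1' ⊢
    have h2 : (0:ℝ) < 2^k := by positivity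
    nlinarith [pow_nonneg (norm_nonneg ξ) (k*2)]

lemma schwartz_bound (φ : SchwartzMap E3 ℂ) (c : ℝ) :
    ∃ C : ℝ, 0 ≤ C ∧ ∀ ξ : E3, ((1:ℝ)+‖ξ‖^2)^c * ‖φ ξ‖ ≤ C := by
  obtain ⟨k, hk⟩ := exists_nat_ge c
  obtain ⟨C0, hC0pos, hC0⟩ := φ.decay 0 0
  obtain ⟨C1, hC1pos, hC1⟩ := φ.decay (2*k) 0
  simp only [pow_zero, one_mul, norm_iteratedFDeriv_zero] at hC0 hC1
  have h0 : 0 ≤ C0 := hC0pos.le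
  have h1 : 0 ≤ C1 := hC1pos.le
  refine ⟨2^k * (C0 + C1), by positivity, fun ξ => ?_⟩
  have := wpow_le c k hk ξ
  have hb0 := hC0 ξ
  have hb1 := hC1 ξ
  have hφ : (0:ℝ) ≤ ‖φ ξ‖ := norm_nonneg _
  have h2k : (0:ℝ) < 2^k := by positivity
  have hw : (0:ℝ) < ((1:ℝ)+‖ξ‖^2)^c := Real.rpow_pos_of_pos (w_pos ξ) c
  nlinarith [pow_nonneg (norm_nonneg ξ) (2*k)]

lemma schwartz_wgt_integrable (φ : SchwartzMap E3 ℂ) (c : ℝ) :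
    Integrable (fun ξ : E3 => ((1:ℝ)+‖ξ‖^2)^c * ‖φ ξ‖^2) := by
  obtain ⟨k, hk⟩ := exists_nat_ge c
  obtain ⟨C0, hC0pos, hC0⟩ := φ.decay 0 0
  obtain ⟨C1, hC1pos, hC1⟩ := φ.decay (2*k) 0
  simp only [pow_zero, one_mul, norm_iteratedFDeriv_zero] at hC0 hC1
  have h0 : 0 ≤ C0 := hC0pos.le
  have h1 : 0 ≤ C1 := hC1pos.le
  refine ((φ.integrable.norm.const_mul (2^k * (C0 + C1)))).mono' ?_ ?_
  · apply Continuous.aestronglyMeasurable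
    exact ((continuous_const.add ((continuous_norm).pow 2)).rpow_const
      (fun x => Or.inl (ne_of_gt (w_pos x)))).mul ((φ.continuous.norm).pow 2)
  · filter_upwards with ξ
    have hw : (0:ℝ) < ((1:ℝ)+‖ξ‖^2)^c := Real.rpow_pos_of_pos (w_pos ξ) c
    have hφ : (0:ℝ) ≤ ‖φ ξ‖ := norm_nonneg _
    rw [Real.norm_eq_abs, _root_.abs_of_nonneg (by positivity)]
    have hto := wpow_le c k hk ξ
    have hb0 := hC0 ξ
    have hb1 := hC1 ξ
    have h2k : (0:ℝ) ≤ 2^k := by positivity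
    calc ((1:ℝ)+‖ξ‖^2)^c * ‖φ ξ‖^2
        ≤ (2^k * (1 + ‖ξ‖^(2*k))) * ‖φ ξ‖^2 :=
          mul_le_mul_of_nonneg_right hto (sq_nonneg _)
      _ = 2^k * (‖φ ξ‖ * ‖φ ξ‖ + (‖ξ‖^(2*k) * ‖φ ξ‖) * ‖φ ξ‖) := by ring
      _ ≤ 2^k * (C0 * ‖φ ξ‖ + C1 * ‖φ ξ‖) := by
          apply mul_le_mul_of_nonneg_left _ h2k
          exact add_le_add (mul_le_mul_of_nonneg_right hb0 hφ)
            (mul_le_mul_of_nonneg_right hb1 hφ)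
      _ = 2 ^ k * (C0 + C1) * ‖φ ξ‖ := by ring

lemma fourier_integrable (φ : SchwartzMap E3 ℂ) : Integrable (𝓕 ⇑φ) := by
  have := (SchwartzMap.fourierTransformCLM ℂ φ).integrable (μ := volume)
  rwa [SchwartzMap.fourierTransformCLM_apply] at this

lemma fourier_continuous (φ : SchwartzMap E3 ℂ) : Continuous (𝓕 ⇑φ) := by
  rw [← SchwartzMap.fourier_coe]
  exact (SchwartzMap.fourierTransformCLM ℂ φ).continuous

lemma norm_cexp_mul (r : ℝ) (z : ℂ) :
    ‖Complex.exp ((r : ℂ) * Complex.I) * z‖ = ‖z‖ := by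
  rw [norm_mul, Complex.norm_exp_ofReal_mul_I, one_mul]

lemma cont_cexp (c : E3) : Continuous fun x : E3 =>
    Complex.exp ((↑(2*π*⟪x,c⟫) : ℂ) * Complex.I) :=
  Complex.continuous_exp.comp
    ((Complex.continuous_ofReal.comp
      (continuous_const.mul (continuous_id.inner continuous_const))).mul continuous_const)

lemma mul_expand (φ : SchwartzMap E3 ℂ) {w : E3 → ℂ} (hw : Integrable w)
    (hwc : Continuous w) :
    ∫ x, φ x * w x = ∫ ξ, 𝓕 ⇑φ ξ * 𝓕⁻ w ξ := by
  have hφF : Integrable (𝓕 ⇑φ) := fourier_integrable φ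
  have hFc : Continuous (𝓕 ⇑φ) := fourier_continuous φ
  have H := φ.continuous.fourierInv_fourier_eq φ.integrable hφF
  have hinv : ∀ x : E3, φ x
      = ∫ ξ, Complex.exp ((↑(2*π*⟪ξ,x⟫) : ℂ) * Complex.I) * 𝓕 ⇑φ ξ := by
    intro x
    calc φ x = 𝓕⁻ (𝓕 ⇑φ) x := by rw [H]
      _ = ∫ ξ, Complex.exp ((↑(2*π*⟪ξ,x⟫) : ℂ) * Complex.I) • 𝓕 ⇑φ ξ :=
          Real.fourierInv_eq' _ x
      _ = _ := by simp only [smul_eq_mul]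
  have hint : Integrable (Function.uncurry fun (x ξ : E3) =>
      (Complex.exp ((↑(2*π*⟪ξ,x⟫) : ℂ) * Complex.I) * 𝓕 ⇑φ ξ) * w x)
      (volume.prod volume) := by
    have base : Integrable (fun p : E3 × E3 => w p.1 * 𝓕 ⇑φ p.2)
        (volume.prod volume) := hw.mul_prod hφF
    refine base.norm.mono' ?_ ?_
    · apply Continuous.aestronglyMeasurable
      have hin : Continuous fun p : E3 × E3 => ⟪p.2, p.1⟫ :=
        continuous_snd.inner continuous_fst
      have hexp : Continuous fun p : E3 × E3 =>
          Complex.exp ((↑(2*π*⟪p.2,p.1⟫) : ℂ) * Complex.I) :=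
        Complex.continuous_exp.comp
          ((Complex.continuous_ofReal.comp ((continuous_const.mul hin))).mul continuous_const)
      exact (hexp.mul (hFc.comp continuous_snd)).mul (hwc.comp continuous_fst)
    · filter_upwards with p
      calc ‖Function.uncurry (fun (x ξ : E3) =>
              (Complex.exp ((↑(2*π*⟪ξ,x⟫) : ℂ) * Complex.I) * 𝓕 ⇑φ ξ) * w x) p‖
          = ‖Complex.exp ((↑(2*π*⟪p.2,p.1⟫) : ℂ) * Complex.I) * 𝓕 ⇑φ p.2‖ * ‖w p.1‖ := by
            rw [Function.uncurry]; rw [norm_mul]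
        _ = ‖𝓕 ⇑φ p.2‖ * ‖w p.1‖ := by rw [norm_cexp_mul]
        _ ≤ ‖w p.1 * 𝓕 ⇑φ p.2‖ := by rw [norm_mul]; exact le_of_eq (mul_comm _ _)
  calc ∫ x, φ x * w x
      = ∫ x, ∫ ξ, (Complex.exp ((↑(2*π*⟪ξ,x⟫) : ℂ) * Complex.I) * 𝓕 ⇑φ ξ) * w x := by
        refine integral_congr_ae (Filter.Eventually.of_forall fun x => ?_)
        dsimp only
        rw [hinv x, ← integral_mul_const]
    _ = ∫ ξ, ∫ x, (Complex.exp ((↑(2*π*⟪ξ,x⟫) : ℂ) * Complex.I) * 𝓕 ⇑φ ξ) * w x :=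
        integral_integral_swap hint
    _ = ∫ ξ, 𝓕 ⇑φ ξ * ∫ x, Complex.exp ((↑(2*π*⟪x,ξ⟫) : ℂ) * Complex.I) * w x := by
        refine integral_congr_ae (Filter.Eventually.of_forall fun ξ => ?_)
        dsimp only
        rw [← integral_const_mul]
        refine integral_congr_ae (Filter.Eventually.of_forall fun x => ?_)
        dsimp only
        rw [real_inner_comm x ξ]
        ring
    _ = ∫ ξ, 𝓕 ⇑φ ξ * 𝓕⁻ w ξ := by
        refine integral_congr_ae (Filter.Eventually.of_forall fun ξ => ?_)
        dsimp only
        rw [Real.fourierInv_eq']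
        simp only [smul_eq_mul]

lemma keyA (f g h : SchwartzMap E3 ℂ) :
    ∫ x, f x * g x * h x = ∫ ξ, 𝓕 ⇑f ξ * ∫ η, 𝓕 ⇑g η * 𝓕 ⇑h (-(ξ+η)) := by
  obtain ⟨Cg, _, hCg⟩ := g.decay 0 0
  simp only [pow_zero, one_mul, norm_iteratedFDeriv_zero] at hCg
  have hghInt : Integrable (fun x : E3 => g x * h x) := by
    refine (h.integrable.norm.const_mul Cg).mono'
      ((g.continuous.mul h.continuous).aestronglyMeasurable) ?_
    filter_upwards with x
    rw [norm_mul]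
    exact mul_le_mul_of_nonneg_right (hCg x) (norm_nonneg _)
  have step1 : ∫ x, f x * (g x * h x)
      = ∫ ξ, 𝓕 ⇑f ξ * 𝓕⁻ (fun x => g x * h x) ξ :=
    mul_expand f hghInt (g.continuous.mul h.continuous)
  have step2 : ∀ ξ : E3, 𝓕⁻ (fun x => g x * h x) ξ
      = ∫ η, 𝓕 ⇑g η * 𝓕 ⇑h (-(ξ+η)) := by
    intro ξ
    have hw2c : Continuous (fun x : E3 =>
        Complex.exp ((↑(2*π*⟪x,ξ⟫) : ℂ) * Complex.I) * h x) :=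
      (cont_cexp ξ).mul h.continuous
    have hw2 : Integrable (fun x : E3 =>
        Complex.exp ((↑(2*π*⟪x,ξ⟫) : ℂ) * Complex.I) * h x) := by
      refine h.integrable.norm.mono' hw2c.aestronglyMeasurable ?_
      filter_upwards with x
      exact le_of_eq (norm_cexp_mul _ _)
    calc 𝓕⁻ (fun x => g x * h x) ξ
        = ∫ x, Complex.exp ((↑(2*π*⟪x,ξ⟫) : ℂ) * Complex.I) • (g x * h x) :=
          Real.fourierInv_eq' _ ξ
      _ = ∫ x, g x * (Complex.exp ((↑(2*π*⟪x,ξ⟫) : ℂ) * Complex.I) * h x) := by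
          refine integral_congr_ae (Filter.Eventually.of_forall fun x => ?_)
          dsimp only
          rw [smul_eq_mul]
          ring
      _ = ∫ η, 𝓕 ⇑g η *
            𝓕⁻ (fun x => Complex.exp ((↑(2*π*⟪x,ξ⟫) : ℂ) * Complex.I) * h x) η :=
          mul_expand g hw2 hw2c
      _ = ∫ η, 𝓕 ⇑g η * 𝓕 ⇑h (-(ξ+η)) := by
          refine integral_congr_ae (Filter.Eventually.of_forall fun η => ?_)
          dsimp only
          congr 1
          calc 𝓕⁻ (fun x => Complex.exp ((↑(2*π*⟪x,ξ⟫) : ℂ) * Complex.I) * h x) η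
              = ∫ x, Complex.exp ((↑(2*π*⟪x,η⟫) : ℂ) * Complex.I) •
                  (Complex.exp ((↑(2*π*⟪x,ξ⟫) : ℂ) * Complex.I) * h x) :=
                Real.fourierInv_eq' _ η
            _ = ∫ x, Complex.exp ((↑(2*π*⟪x,ξ+η⟫) : ℂ) * Complex.I) • h x := by
                refine integral_congr_ae (Filter.Eventually.of_forall fun x => ?_)
                dsimp only
                rw [smul_eq_mul, smul_eq_mul, ← mul_assoc, ← Complex.exp_add,
                  inner_add_right]
                push_cast
                ring_nf
            _ = 𝓕⁻ (⇑h) (ξ+η) := (Real.fourierInv_eq' _ _).symm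
            _ = 𝓕 ⇑h (-(ξ+η)) := Real.fourierInv_eq_fourier_neg _ _
  calc ∫ x, f x * g x * h x = ∫ x, f x * (g x * h x) := by
        refine integral_congr_ae (Filter.Eventually.of_forall fun x => ?_)
        dsimp only
        ring
    _ = ∫ ξ, 𝓕 ⇑f ξ * 𝓕⁻ (fun x => g x * h x) ξ := step1
    _ = _ := by
        refine integral_congr_ae (Filter.Eventually.of_forall fun ξ => ?_)
        dsimp only
        rw [step2 ξ]

lemma kernel_bound (s : ℝ) (hs : 3/4 < s) (ξ η : E3) :
    ((1:ℝ)+‖η‖^2)^(-((s+1/4)/2)) * ((1:ℝ)+‖ξ+η‖^2)^(-((s+1/4)/2)) ≤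
      (2:ℝ)^((s-3/4)/2) * ((1:ℝ)+‖ξ‖^2)^((3/4-s)/2) *
        (((1:ℝ)+‖η‖^2)^((-1:ℝ)/2) * ((1:ℝ)+‖ξ+η‖^2)^((-1:ℝ)/2)) := by
  have hA : (0:ℝ) < 1+‖ξ‖^2 := w_pos ξ
  have hB : (0:ℝ) < 1+‖η‖^2 := w_pos η
  have hC : (0:ℝ) < 1+‖ξ+η‖^2 := w_pos (ξ+η)
  set A := (1:ℝ)+‖ξ‖^2
  set B := (1:ℝ)+‖η‖^2
  set Cc := (1:ℝ)+‖ξ+η‖^2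
  set t := (s-3/4)/2 with htdef
  have ht : 0 ≤ t := by rw [htdef]; linarith
  have hP : A ≤ 2*(Cc*B) := by
    have hpe := peetre (ξ+η) (-η)
    rw [add_neg_cancel_right, norm_neg] at hpe
    exact hpe
  have hAt : A^t ≤ (2:ℝ)^t * (Cc^t * B^t) := by
    calc A^t ≤ (2*(Cc*B))^t := Real.rpow_le_rpow hA.le hP ht
      _ = (2:ℝ)^t*(Cc^t*B^t) := by
          rw [Real.mul_rpow (by norm_num) (by positivity),
            Real.mul_rpow hC.le hB.le]
  have hsplit : ∀ x : ℝ, 0 < x → x^(-((s+1/4)/2)) = x^((-1:ℝ)/2) * x^(-t) := by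
    intro x hx
    rw [← Real.rpow_add hx]
    congr 1
    rw [htdef]; ring
  rw [hsplit B hB, hsplit Cc hC]
  have hA' : A^((3/4-s)/2) = A^(-t) := by congr 1; rw [htdef]; ring
  rw [hA']
  have hmain : B^(-t) * Cc^(-t) ≤ (2:ℝ)^t * A^(-t) := by
    rw [Real.rpow_neg hB.le, Real.rpow_neg hC.le, Real.rpow_neg hA.le, ← mul_inv]
    have h1 : (0:ℝ) < B^t*Cc^t := by positivity
    have h2 : (0:ℝ) < A^t := by positivity
    rw [← one_div, show (2:ℝ)^t * (A^t)⁻¹ = (2:ℝ)^t / A^t by rw [div_eq_mul_inv],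
      div_le_div_iff₀ h1 h2, one_mul]
    calc A^t ≤ (2:ℝ)^t * (Cc^t * B^t) := hAt
      _ = (2:ℝ)^t * (B^t * Cc^t) := by ring
  calc (B^((-1:ℝ)/2) * B^(-t)) * (Cc^((-1:ℝ)/2) * Cc^(-t))
      = (B^((-1:ℝ)/2) * Cc^((-1:ℝ)/2)) * (B^(-t) * Cc^(-t)) := by ring
    _ ≤ (B^((-1:ℝ)/2) * Cc^((-1:ℝ)/2)) * ((2:ℝ)^t * A^(-t)) :=
        mul_le_mul_of_nonneg_left hmain (by positivity)
    _ = _ := by ring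

lemma sobNorm_eq (σ : ℝ) (φ : E3 → ℂ) :
    sobNorm σ φ = Real.sqrt (∫ ξ : E3, ((1:ℝ)+‖ξ‖^2)^σ * ‖𝓕 φ ξ‖^2) := by
  rw [sobNorm, Real.sqrt_eq_rpow]
  congr 1
  refine integral_congr_ae (Filter.Eventually.of_forall fun ξ => ?_)
  dsimp only
  congr 1
  rw [Real.sqrt_eq_rpow, ← Real.rpow_mul (by positivity)]
  congr 1
  ring

end TrilinearAux

open TrilinearAux SchwartzMap

set_option maxHeartbeats 1000000

/-- Trilinear Sobolev estimate: |∫ fgh| ≲ ‖f‖_{H^{3/4-s}} ‖g‖_{H^{s+1/4}} ‖h‖_{H^{s+1/4}}. -/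
theorem stmt_6 (s : ℝ) (hs : 3/4 < s) :
    ∃ C > 0, ∀ f g h : SchwartzMap (EuclideanSpace ℝ (Fin 3)) ℂ,
      ‖∫ x : EuclideanSpace ℝ (Fin 3), f x * g x * h x‖
        ≤ C * sobNorm (3/4 - s) f * sobNorm (s + 1/4) g * sobNorm (s + 1/4) h := by
  classical
  have hwcont : ∀ c : ℝ, Continuous fun ζ : EuclideanSpace ℝ (Fin 3) => ((1:ℝ)+‖ζ‖^2)^c :=
    fun c => (continuous_const.add ((continuous_norm).pow 2)).rpow_const
      (fun x => Or.inl (ne_of_gt (w_pos x)))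
  -- the master constant M
  have hMint : Integrable (fun η : EuclideanSpace ℝ (Fin 3) => ((1:ℝ)+‖η‖^2) ^ (-(2:ℝ))) := by
    have h4 : ((Module.finrank ℝ (EuclideanSpace ℝ (Fin 3)) : ℝ)) < 4 := by
      simp only [finrank_euclideanSpace, Fintype.card_fin]
      norm_num
    have hE := integrable_rpow_neg_one_add_norm_sq (E := EuclideanSpace ℝ (Fin 3))
      (μ := volume) (r := 4) h4
    refine hE.congr (Filter.Eventually.of_forall fun η => ?_)
    norm_num
  set M : ℝ := ∫ η : EuclideanSpace ℝ (Fin 3), ((1:ℝ)+‖η‖^2) ^ (-(2:ℝ)) with hMdef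
  have hM0 : 0 ≤ M := integral_nonneg fun η => Real.rpow_nonneg (by positivity) _
  refine ⟨(2:ℝ)^((s-3/4)/2) * (Real.sqrt M + 1), by positivity, fun f g h => ?_⟩
  -- weighted Fourier-side functions
  set F : EuclideanSpace ℝ (Fin 3) → ℝ :=
    fun ξ => ((1:ℝ)+‖ξ‖^2)^((3/4-s)/2) * ‖𝓕 ⇑f ξ‖ with hFdef
  set G : EuclideanSpace ℝ (Fin 3) → ℝ :=
    fun η => ((1:ℝ)+‖η‖^2)^((s+1/4)/2) * ‖𝓕 ⇑g η‖ with hGdef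
  set H : EuclideanSpace ℝ (Fin 3) → ℝ :=
    fun ζ => ((1:ℝ)+‖ζ‖^2)^((s+1/4)/2) * ‖𝓕 ⇑h (-ζ)‖ with hHdef
  set q : EuclideanSpace ℝ (Fin 3) → ℝ :=
    fun ζ => ((1:ℝ)+‖ζ‖^2)^((-1:ℝ)/2) with hqdef
  have hFcont : Continuous F := (hwcont _).mul (fourier_continuous f).norm
  have hGcont : Continuous G := (hwcont _).mul (fourier_continuous g).norm
  have hHcont : Continuous H :=
    (hwcont _).mul ((fourier_continuous h).comp continuous_neg).norm
  have hqcont : Continuous q := hwcont _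
  have hF0 : ∀ ξ, 0 ≤ F ξ := fun ξ => by rw [hFdef]; positivity
  have hG0 : ∀ η, 0 ≤ G η := fun η => by rw [hGdef]; positivity
  have hH0 : ∀ ζ, 0 ≤ H ζ := fun ζ => by rw [hHdef]; positivity
  have hq0 : ∀ ζ, 0 ≤ q ζ := fun ζ => by rw [hqdef]; positivity
  -- integrability of squares
  have hF2 : Integrable (fun ξ => F ξ^2) := by
    have base := schwartz_wgt_integrable (SchwartzMap.fourierTransformCLM ℂ f) (3/4 - s)
    simp only [SchwartzMap.fourierTransformCLM_apply] at base
    refine base.congr (Filter.Eventually.of_forall fun ξ => ?_)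
    rw [hFdef]
    dsimp only
    rw [mul_pow, rpow_sq_eq _ (by positivity)]
    congr 2
    ring
  have hG2 : Integrable (fun η => G η^2) := by
    have base := schwartz_wgt_integrable (SchwartzMap.fourierTransformCLM ℂ g) (s + 1/4)
    simp only [SchwartzMap.fourierTransformCLM_apply] at base
    refine base.congr (Filter.Eventually.of_forall fun η => ?_)
    rw [hGdef]
    dsimp only
    rw [mul_pow, rpow_sq_eq _ (by positivity)]
    congr 2
    ring
  have hHbase : Integrable
      (fun ζ : EuclideanSpace ℝ (Fin 3) => ((1:ℝ)+‖ζ‖^2)^(s+1/4) * ‖𝓕 ⇑h ζ‖^2) := by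
    have base := schwartz_wgt_integrable (SchwartzMap.fourierTransformCLM ℂ h) (s + 1/4)
    exact base
  have hH2 : Integrable (fun ζ => H ζ^2) := by
    have hc := ((MeasureTheory.Measure.measurePreserving_neg
        (volume : Measure (EuclideanSpace ℝ (Fin 3)))).integrable_comp
        hHbase.aestronglyMeasurable).mpr hHbase
    refine hc.congr (Filter.Eventually.of_forall fun ζ => ?_)
    rw [hHdef]
    simp only [Function.comp_apply, norm_neg]
    rw [mul_pow, rpow_sq_eq _ (by positivity)]
    congr 2
    ring
  have hHval : ∫ ζ, H ζ^2 = ∫ ζ : EuclideanSpace ℝ (Fin 3),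
      ((1:ℝ)+‖ζ‖^2)^(s+1/4) * ‖𝓕 ⇑h ζ‖^2 := by
    rw [← integral_neg_eq_self
      (fun ζ : EuclideanSpace ℝ (Fin 3) => ((1:ℝ)+‖ζ‖^2)^(s+1/4) * ‖𝓕 ⇑h ζ‖^2) volume]
    refine integral_congr_ae (Filter.Eventually.of_forall fun ζ => ?_)
    rw [hHdef]
    dsimp only
    rw [norm_neg, mul_pow, rpow_sq_eq _ (by positivity)]
    congr 2
    ring
  -- bound on H
  obtain ⟨CH, hCH0, hCHb'⟩ := schwartz_bound (SchwartzMap.fourierTransformCLM ℂ h) ((s+1/4)/2)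
  simp only [SchwartzMap.fourierTransformCLM_apply] at hCHb'
  have hCHb : ∀ ζ, H ζ ≤ CH := by
    intro ζ
    rw [hHdef]
    dsimp only
    have := hCHb' (-ζ)
    rwa [norm_neg] at this
  -- bound on 𝓕 h
  obtain ⟨Ch0, hCh00, hCh0'⟩ := schwartz_bound (SchwartzMap.fourierTransformCLM ℂ h) 0
  simp only [SchwartzMap.fourierTransformCLM_apply, Real.rpow_zero, one_mul] at hCh0'
  -- product integrability for Φ
  have hGH2prod : Integrable
      (Function.uncurry fun ξ η : EuclideanSpace ℝ (Fin 3) => G η^2 * H (ξ+η)^2)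
      (volume.prod volume) := by
    have base : Integrable (fun p : (EuclideanSpace ℝ (Fin 3)) × (EuclideanSpace ℝ (Fin 3)) =>
        G p.1^2 * H p.2^2) (volume.prod volume) := hG2.mul_prod hH2
    have hmp := MeasureTheory.measurePreserving_prod_add_swap
      (μ := (volume : Measure (EuclideanSpace ℝ (Fin 3)))) (ν := volume)
    have hcomp := (hmp.integrable_comp base.aestronglyMeasurable).mpr base
    refine hcomp.congr (Filter.Eventually.of_forall fun p => ?_)
    simp only [Function.comp_apply, Function.uncurry]
    rw [add_comm p.2 p.1]
  set Φ : EuclideanSpace ℝ (Fin 3) → ℝ := fun ξ => ∫ η, G η^2 * H (ξ+η)^2 with hΦdef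
  have hΦint : Integrable Φ := by
    have := hGH2prod.integral_prod_left
    refine this.congr (Filter.Eventually.of_forall fun ξ => ?_)
    simp only [Function.uncurry]
    rfl
  have hΦ0 : ∀ ξ, 0 ≤ Φ ξ := fun ξ => integral_nonneg fun η => by positivity
  have hΦval : ∫ ξ, Φ ξ = (∫ η, G η^2) * (∫ ζ, H ζ^2) := by
    rw [hΦdef]
    calc ∫ ξ, ∫ η, G η^2 * H (ξ+η)^2
        = ∫ η, ∫ ξ, G η^2 * H (ξ+η)^2 := integral_integral_swap hGH2prod
      _ = ∫ η, G η^2 * ∫ ξ, H (ξ+η)^2 := by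
          refine integral_congr_ae (Filter.Eventually.of_forall fun η => ?_)
          dsimp only
          rw [integral_const_mul]
      _ = ∫ η, G η^2 * ∫ ζ, H ζ^2 := by
          refine integral_congr_ae (Filter.Eventually.of_forall fun η => ?_)
          dsimp only
          rw [integral_add_right_eq_self (fun ζ => H ζ^2) η]
      _ = (∫ η, G η^2) * ∫ ζ, H ζ^2 := integral_mul_const _ _
  -- translated weights
  have htransInt : ∀ ξ : EuclideanSpace ℝ (Fin 3),
      Integrable (fun η : EuclideanSpace ℝ (Fin 3) => ((1:ℝ)+‖ξ+η‖^2) ^ (-(2:ℝ))) := by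
    intro ξ
    have := ((MeasureTheory.measurePreserving_add_left
        (volume : Measure (EuclideanSpace ℝ (Fin 3))) ξ).integrable_comp
        hMint.aestronglyMeasurable).mpr hMint
    exact this.congr (Filter.Eventually.of_forall fun η => rfl)
  have htransVal : ∀ ξ : EuclideanSpace ℝ (Fin 3),
      (∫ η : EuclideanSpace ℝ (Fin 3), ((1:ℝ)+‖ξ+η‖^2) ^ (-(2:ℝ))) = M := by
    intro ξ
    rw [hMdef]
    exact integral_add_left_eq_self
      (fun ζ : EuclideanSpace ℝ (Fin 3) => ((1:ℝ)+‖ζ‖^2) ^ (-(2:ℝ))) ξ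
  -- translated H squared
  have hH2trans : ∀ ξ : EuclideanSpace ℝ (Fin 3),
      Integrable (fun η => H (ξ+η)^2) := by
    intro ξ
    have := ((MeasureTheory.measurePreserving_add_left
        (volume : Measure (EuclideanSpace ℝ (Fin 3))) ξ).integrable_comp
        hH2.aestronglyMeasurable).mpr hH2
    exact this.congr (Filter.Eventually.of_forall fun η => rfl)
  -- the inner estimate for fixed ξ
  have inner_est : ∀ ξ : EuclideanSpace ℝ (Fin 3),
      (∫ η, ‖𝓕 ⇑g η‖ * ‖𝓕 ⇑h (-(ξ+η))‖) ≤
        (2:ℝ)^((s-3/4)/2) * ((1:ℝ)+‖ξ‖^2)^((3/4-s)/2) *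
          (Real.sqrt M * Real.sqrt (Φ ξ)) := by
    intro ξ
    have hq2 : ∀ ζ : EuclideanSpace ℝ (Fin 3), q ζ^2 = ((1:ℝ)+‖ζ‖^2) ^ (-(1:ℝ)) := by
      intro ζ
      rw [hqdef]
      dsimp only
      rw [rpow_sq_eq _ (by positivity)]
      congr 1
      ring
    have hqmul2 : ∀ η : EuclideanSpace ℝ (Fin 3), (q η * q (ξ+η))^2 ≤
        (1/2) * (((1:ℝ)+‖η‖^2) ^ (-(2:ℝ)) + ((1:ℝ)+‖ξ+η‖^2) ^ (-(2:ℝ))) := by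
      intro η
      rw [mul_pow, hq2 η, hq2 (ξ+η)]
      have e1 : ((1:ℝ)+‖η‖^2) ^ (-(2:ℝ)) = (((1:ℝ)+‖η‖^2) ^ (-(1:ℝ)))^2 := by
        rw [rpow_sq_eq _ (by positivity)]; congr 1; ring
      have e2 : ((1:ℝ)+‖ξ+η‖^2) ^ (-(2:ℝ)) = (((1:ℝ)+‖ξ+η‖^2) ^ (-(1:ℝ)))^2 := by
        rw [rpow_sq_eq _ (by positivity)]; congr 1; ring
      rw [e1, e2]
      nlinarith [sq_nonneg (((1:ℝ)+‖η‖^2) ^ (-(1:ℝ)) - ((1:ℝ)+‖ξ+η‖^2) ^ (-(1:ℝ)))]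
    have hKint : Integrable (fun η => (q η * q (ξ+η))^2) := by
      refine ((hMint.add (htransInt ξ)).const_mul (1/2)).mono' ?_ ?_
      · exact ((hqcont.mul (hqcont.comp (continuous_const.add continuous_id))).pow 2
          ).aestronglyMeasurable
      · filter_upwards with η
        rw [Real.norm_eq_abs, _root_.abs_of_nonneg (by positivity)]
        exact hqmul2 η
    have hGHint : Integrable (fun η => (G η * H (ξ+η))^2) := by
      refine ((hG2.const_mul (CH^2))).mono' ?_ ?_
      · exact ((hGcont.mul (hHcont.comp (continuous_const.add continuous_id))).pow 2
          ).aestronglyMeasurable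
      · filter_upwards with η
        rw [Real.norm_eq_abs, _root_.abs_of_nonneg (by positivity), mul_pow]
        calc G η^2 * H (ξ+η)^2 ≤ G η^2 * CH^2 := by
              apply mul_le_mul_of_nonneg_left _ (sq_nonneg _)
              exact pow_le_pow_left₀ (hH0 _) (hCHb _) 2
          _ = CH^2 * G η^2 := by ring
    have hUV : Integrable (fun η => (q η * q (ξ+η)) * (G η * H (ξ+η))) := by
      refine aux_integrable_mul ?_ ?_ hKint hGHint
      · exact (hqcont.mul (hqcont.comp (continuous_const.add continuous_id))
          ).aestronglyMeasurable
      · exact (hGcont.mul (hHcont.comp (continuous_const.add continuous_id))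
          ).aestronglyMeasurable
    have hLHSint : Integrable (fun η => ‖𝓕 ⇑g η‖ * ‖𝓕 ⇑h (-(ξ+η))‖) := by
      refine ((fourier_integrable g).norm.const_mul Ch0).mono' ?_ ?_
      · exact ((fourier_continuous g).norm.mul (((fourier_continuous h).comp
          ((continuous_const.add continuous_id).neg)).norm)).aestronglyMeasurable
      · filter_upwards with η
        rw [Real.norm_eq_abs, _root_.abs_of_nonneg (by positivity)]
        calc ‖𝓕 ⇑g η‖ * ‖𝓕 ⇑h (-(ξ+η))‖ ≤ ‖𝓕 ⇑g η‖ * Ch0 :=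
              mul_le_mul_of_nonneg_left (hCh0' _) (norm_nonneg _)
          _ = Ch0 * ‖𝓕 ⇑g η‖ := by ring
    -- pointwise bound
    have hpt : ∀ η, ‖𝓕 ⇑g η‖ * ‖𝓕 ⇑h (-(ξ+η))‖ ≤
        ((2:ℝ)^((s-3/4)/2) * ((1:ℝ)+‖ξ‖^2)^((3/4-s)/2)) *
          ((q η * q (ξ+η)) * (G η * H (ξ+η))) := by
      intro η
      have hid : ‖𝓕 ⇑g η‖ * ‖𝓕 ⇑h (-(ξ+η))‖ =
          (((1:ℝ)+‖η‖^2)^(-((s+1/4)/2)) * ((1:ℝ)+‖ξ+η‖^2)^(-((s+1/4)/2))) *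
            (G η * H (ξ+η)) := by
        rw [hGdef, hHdef]
        dsimp only
        calc ‖𝓕 ⇑g η‖ * ‖𝓕 ⇑h (-(ξ+η))‖
            = ((((1:ℝ)+‖η‖^2)^(-((s+1/4)/2)) * ((1:ℝ)+‖η‖^2)^((s+1/4)/2)) *
              (((1:ℝ)+‖ξ+η‖^2)^(-((s+1/4)/2)) * ((1:ℝ)+‖ξ+η‖^2)^((s+1/4)/2))) *
                (‖𝓕 ⇑g η‖ * ‖𝓕 ⇑h (-(ξ+η))‖) := by
              rw [cancel_rpow η, cancel_rpow (ξ+η), one_mul, one_mul]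
          _ = _ := by ring
      rw [hid]
      have hkb := kernel_bound s hs ξ η
      calc (((1:ℝ)+‖η‖^2)^(-((s+1/4)/2)) * ((1:ℝ)+‖ξ+η‖^2)^(-((s+1/4)/2))) *
            (G η * H (ξ+η))
          ≤ ((2:ℝ)^((s-3/4)/2) * ((1:ℝ)+‖ξ‖^2)^((3/4-s)/2) *
              (((1:ℝ)+‖η‖^2)^((-1:ℝ)/2) * ((1:ℝ)+‖ξ+η‖^2)^((-1:ℝ)/2))) *
            (G η * H (ξ+η)) := by
            apply mul_le_mul_of_nonneg_right hkb
            have := hG0 η; have := hH0 (ξ+η); positivity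
        _ = _ := by rw [hqdef]; dsimp only; ring
    -- kernel L2 bound
    have hKval : (∫ η, (q η * q (ξ+η))^2) ≤ M := by
      calc (∫ η, (q η * q (ξ+η))^2)
          ≤ ∫ η, (1/2) * (((1:ℝ)+‖η‖^2) ^ (-(2:ℝ)) + ((1:ℝ)+‖ξ+η‖^2) ^ (-(2:ℝ))) :=
            integral_mono hKint ((hMint.add (htransInt ξ)).const_mul (1/2)) hqmul2
        _ = (1/2) * ((∫ η : EuclideanSpace ℝ (Fin 3), ((1:ℝ)+‖η‖^2) ^ (-(2:ℝ))) +
              ∫ η : EuclideanSpace ℝ (Fin 3), ((1:ℝ)+‖ξ+η‖^2) ^ (-(2:ℝ))) := by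
            rw [integral_const_mul, integral_add hMint (htransInt ξ)]
        _ = M := by rw [htransVal ξ, ← hMdef]; ring
    calc (∫ η, ‖𝓕 ⇑g η‖ * ‖𝓕 ⇑h (-(ξ+η))‖)
        ≤ ∫ η, ((2:ℝ)^((s-3/4)/2) * ((1:ℝ)+‖ξ‖^2)^((3/4-s)/2)) *
            ((q η * q (ξ+η)) * (G η * H (ξ+η))) :=
          integral_mono hLHSint (hUV.const_mul _) hpt
      _ = ((2:ℝ)^((s-3/4)/2) * ((1:ℝ)+‖ξ‖^2)^((3/4-s)/2)) *
            ∫ η, (q η * q (ξ+η)) * (G η * H (ξ+η)) := integral_const_mul _ _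
      _ ≤ ((2:ℝ)^((s-3/4)/2) * ((1:ℝ)+‖ξ‖^2)^((3/4-s)/2)) *
            (Real.sqrt (∫ η, (q η * q (ξ+η))^2) *
              Real.sqrt (∫ η, (G η * H (ξ+η))^2)) := by
          apply mul_le_mul_of_nonneg_left _ (by positivity)
          refine aux_CS ?_ ?_ ?_ ?_ hKint hGHint
          · exact (hqcont.mul (hqcont.comp (continuous_const.add continuous_id))
              ).aestronglyMeasurable
          · exact (hGcont.mul (hHcont.comp (continuous_const.add continuous_id))
              ).aestronglyMeasurable
          · intro η; exact mul_nonneg (hq0 _) (hq0 _)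
          · intro η; exact mul_nonneg (hG0 _) (hH0 _)
      _ ≤ (2:ℝ)^((s-3/4)/2) * ((1:ℝ)+‖ξ‖^2)^((3/4-s)/2) *
            (Real.sqrt M * Real.sqrt (Φ ξ)) := by
          apply mul_le_mul_of_nonneg_left _ (by positivity)
          have h1 : Real.sqrt (∫ η, (q η * q (ξ+η))^2) ≤ Real.sqrt M :=
            Real.sqrt_le_sqrt hKval
          have h2 : Real.sqrt (∫ η, (G η * H (ξ+η))^2) = Real.sqrt (Φ ξ) := by
            rw [hΦdef]
            congr 1
            refine integral_congr_ae (Filter.Eventually.of_forall fun η => ?_)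
            dsimp only
            rw [mul_pow]
          rw [h2]
          exact mul_le_mul_of_nonneg_right h1 (Real.sqrt_nonneg _)
  -- dominating function
  have hsqrtΦmeas : AEStronglyMeasurable (fun ξ => Real.sqrt (Φ ξ)) volume :=
    Real.continuous_sqrt.comp_aestronglyMeasurable hΦint.aestronglyMeasurable
  have hsqrtΦ2 : Integrable (fun ξ => (Real.sqrt (Φ ξ))^2) := by
    refine hΦint.congr (Filter.Eventually.of_forall fun ξ => ?_)
    dsimp only
    rw [Real.sq_sqrt (hΦ0 ξ)]
  have hDint : Integrable (fun ξ =>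
      ((2:ℝ)^((s-3/4)/2) * Real.sqrt M) * (F ξ * Real.sqrt (Φ ξ))) := by
    exact (aux_integrable_mul hFcont.aestronglyMeasurable hsqrtΦmeas hF2 hsqrtΦ2).const_mul _
  have hnorm_le : ‖∫ x, f x * g x * h x‖ ≤
      ∫ ξ, ((2:ℝ)^((s-3/4)/2) * Real.sqrt M) * (F ξ * Real.sqrt (Φ ξ)) := by
    rw [keyA f g h]
    refine norm_integral_le_of_norm_le hDint (Filter.Eventually.of_forall fun ξ => ?_)
    calc ‖𝓕 ⇑f ξ * ∫ η, 𝓕 ⇑g η * 𝓕 ⇑h (-(ξ+η))‖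
        = ‖𝓕 ⇑f ξ‖ * ‖∫ η, 𝓕 ⇑g η * 𝓕 ⇑h (-(ξ+η))‖ := norm_mul _ _
      _ ≤ ‖𝓕 ⇑f ξ‖ * ∫ η, ‖𝓕 ⇑g η * 𝓕 ⇑h (-(ξ+η))‖ :=
          mul_le_mul_of_nonneg_left (norm_integral_le_integral_norm _) (norm_nonneg _)
      _ = ‖𝓕 ⇑f ξ‖ * ∫ η, ‖𝓕 ⇑g η‖ * ‖𝓕 ⇑h (-(ξ+η))‖ := by
          congr 1
          refine integral_congr_ae (Filter.Eventually.of_forall fun η => ?_)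
          dsimp only
          rw [norm_mul]
      _ ≤ ‖𝓕 ⇑f ξ‖ * ((2:ℝ)^((s-3/4)/2) * ((1:ℝ)+‖ξ‖^2)^((3/4-s)/2) *
            (Real.sqrt M * Real.sqrt (Φ ξ))) :=
          mul_le_mul_of_nonneg_left (inner_est ξ) (norm_nonneg _)
      _ = ((2:ℝ)^((s-3/4)/2) * Real.sqrt M) * (F ξ * Real.sqrt (Φ ξ)) := by
          rw [hFdef]; dsimp only; ring
  -- identify the Sobolev norms
  have hsobF : sobNorm (3/4 - s) ⇑f = Real.sqrt (∫ ξ, F ξ^2) := by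
    rw [sobNorm_eq]
    congr 1
    refine integral_congr_ae (Filter.Eventually.of_forall fun ξ => ?_)
    rw [hFdef]
    dsimp only
    rw [mul_pow, rpow_sq_eq _ (by positivity)]
    congr 2
    ring
  have hsobG : sobNorm (s + 1/4) ⇑g = Real.sqrt (∫ η, G η^2) := by
    rw [sobNorm_eq]
    congr 1
    refine integral_congr_ae (Filter.Eventually.of_forall fun η => ?_)
    rw [hGdef]
    dsimp only
    rw [mul_pow, rpow_sq_eq _ (by positivity)]
    congr 2
    ring
  have hsobH : sobNorm (s + 1/4) ⇑h = Real.sqrt (∫ ζ, H ζ^2) := by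
    rw [sobNorm_eq, hHval]
  have hIG0 : 0 ≤ ∫ η, G η^2 := integral_nonneg fun η => sq_nonneg _
  -- final chain
  calc ‖∫ x, f x * g x * h x‖
      ≤ ∫ ξ, ((2:ℝ)^((s-3/4)/2) * Real.sqrt M) * (F ξ * Real.sqrt (Φ ξ)) := hnorm_le
    _ = ((2:ℝ)^((s-3/4)/2) * Real.sqrt M) * ∫ ξ, F ξ * Real.sqrt (Φ ξ) :=
        integral_const_mul _ _
    _ ≤ ((2:ℝ)^((s-3/4)/2) * Real.sqrt M) *
          (Real.sqrt (∫ ξ, F ξ^2) * Real.sqrt (∫ ξ, (Real.sqrt (Φ ξ))^2)) := by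
        apply mul_le_mul_of_nonneg_left _ (by positivity)
        exact aux_CS hFcont.aestronglyMeasurable hsqrtΦmeas hF0
          (fun ξ => Real.sqrt_nonneg _) hF2 hsqrtΦ2
    _ = ((2:ℝ)^((s-3/4)/2) * Real.sqrt M) *
          (Real.sqrt (∫ ξ, F ξ^2) * Real.sqrt (∫ ξ, Φ ξ)) := by
        congr 3
        refine integral_congr_ae (Filter.Eventually.of_forall fun ξ => ?_)
        dsimp only
        rw [Real.sq_sqrt (hΦ0 ξ)]
    _ = ((2:ℝ)^((s-3/4)/2) * Real.sqrt M) *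
          (Real.sqrt (∫ ξ, F ξ^2) * (Real.sqrt (∫ η, G η^2) * Real.sqrt (∫ ζ, H ζ^2))) := by
        rw [hΦval, Real.sqrt_mul hIG0]
    _ ≤ (2:ℝ)^((s-3/4)/2) * (Real.sqrt M + 1) * sobNorm (3/4 - s) ⇑f *
          sobNorm (s + 1/4) ⇑g * sobNorm (s + 1/4) ⇑h := by
        rw [hsobF, hsobG, hsobH]
        have h2t : (0:ℝ) ≤ (2:ℝ)^((s-3/4)/2) := by positivity
        have hsM : Real.sqrt M ≤ Real.sqrt M + 1 := by linarith
        calc ((2:ℝ)^((s-3/4)/2) * Real.sqrt M) *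
              (Real.sqrt (∫ ξ, F ξ^2) * (Real.sqrt (∫ η, G η^2) * Real.sqrt (∫ ζ, H ζ^2)))
            = ((2:ℝ)^((s-3/4)/2) * Real.sqrt M) *
              (Real.sqrt (∫ ξ, F ξ^2) * Real.sqrt (∫ η, G η^2) * Real.sqrt (∫ ζ, H ζ^2)) := by
              ring
          _ ≤ ((2:ℝ)^((s-3/4)/2) * (Real.sqrt M + 1)) *
              (Real.sqrt (∫ ξ, F ξ^2) * Real.sqrt (∫ η, G η^2) * Real.sqrt (∫ ζ, H ζ^2)) := by
              apply mul_le_mul_of_nonneg_right _ (by positivity)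
              exact mul_le_mul_of_nonneg_left hsM h2t
          _ = _ := by ring
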